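/- Let V = (Fin K → ℂ) × (Fin K → ℂ) with the symplectic form ω((x,ξ),(x',ξ')) = Σᵢ ξ'ᵢxᵢ − Σᵢ ξᵢx'ᵢ and the standard Hermitian inner product. Let W ⊆ V be a coisotropic subspace of complex dimension K + p, let L ⊆ V be Lagrangian, and let L' be a subspace with W° ⊆ L' ⊆ W such that {x ∈ W : ω(x,y) = 0 for all y ∈ L'} = L' (so L'/W° is Lagrangian in W/W°). Assume finrank(L ∩ L') ≥ p. Then for every ε > 0 there exists a Lagrangian subspace L₁ ⊆ V such that L₁ ∩ W° = {0}, (L₁ ∩ W) + W° = L', and the orthogonal projections onto L₁ and onto L differ by at most ε in operator norm. (This is the statement that the graph of the rational extension of the symplectic reduction t_W is the closure of the graph of t_W over the set {L : L ∩ W° = 0}.) -/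

import Mathlib

noncomputable section

/-- `V = ℂ^K × (ℂ^K)^*` with its standard Hermitian inner product: `EuclideanSpace` indexed by
`Fin K ⊕ Fin K`, the `Sum.inl` coordinates being `x` and the `Sum.inr` coordinates being `ξ`. -/
abbrev V8 (K : ℕ) := EuclideanSpace ℂ (Fin K ⊕ Fin K)

/-- The canonical symplectic form `ω((x,ξ),(x',ξ')) = Σᵢ ξ'ᵢ xᵢ − Σᵢ ξᵢ x'ᵢ`. -/
def omega8 {K : ℕ} : V8 K →ₗ[ℂ] V8 K →ₗ[ℂ] ℂ :=
  LinearMap.mk₂ ℂ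
    (fun v w => ∑ i, w (Sum.inr i) * v (Sum.inl i) - ∑ i, v (Sum.inr i) * w (Sum.inl i))
    (by
      intro m₁ m₂ n
      simp only [PiLp.add_apply, mul_add, add_mul, Finset.sum_add_distrib]
      ring)
    (by
      intro c m n
      simp only [PiLp.smul_apply, smul_eq_mul, mul_sub, Finset.mul_sum, mul_comm,
        mul_left_comm, mul_assoc])
    (by
      intro m n₁ n₂
      simp only [PiLp.add_apply, mul_add, add_mul, Finset.sum_add_distrib]
      ring)
    (by
      intro m c n
      simp only [PiLp.smul_apply, smul_eq_mul, mul_sub, Finset.mul_sum, mul_comm,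
        mul_left_comm, mul_assoc])

/-- The `ω`-orthogonal of a subspace `U`. -/
def sympOrth {K : ℕ} (U : Submodule ℂ (V8 K)) : Submodule ℂ (V8 K) where
  carrier := {v | ∀ u ∈ U, omega8 v u = 0}
  add_mem' := by
    intro a b ha hb u hu
    simp [map_add, LinearMap.add_apply, ha u hu, hb u hu]
  zero_mem' := by
    intro u hu
    simp
  smul_mem' := by
    intro c a ha u hu
    simp [_root_.map_smul, LinearMap.smul_apply, ha u hu]

/-- The orthogonal projection onto a subspace, as an operator on `V`. -/
def projOp {K : ℕ} (U : Submodule ℂ (V8 K)) : V8 K →L[ℂ] V8 K :=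
  U.subtypeL.comp (Submodule.orthogonalProjection U)

namespace Statement8

open Module Submodule

variable {K : ℕ}

lemma omega8_apply (v w : V8 K) : omega8 v w =
    ∑ i, w (Sum.inr i) * v (Sum.inl i) - ∑ i, v (Sum.inr i) * w (Sum.inl i) := rfl

lemma omega8_isAlt : LinearMap.BilinForm.IsAlt (omega8 (K := K)) := fun v => by
  simp [omega8_apply]

lemma omega8_isRefl : LinearMap.BilinForm.IsRefl (omega8 (K := K)) := omega8_isAlt.isRefl

lemma omega8_self (v : V8 K) : omega8 v v = 0 := omega8_isAlt v

lemma omega8_skew (v w : V8 K) : omega8 v w = - omega8 w v := by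
  simp only [omega8_apply]; ring

lemma omega8_nondeg : LinearMap.BilinForm.Nondegenerate (omega8 (K := K)) := by
  refine omega8_isRefl.nondegenerate_iff_separatingLeft.mpr ?_
  intro v hv
  ext j
  simp only [PiLp.zero_apply]
  rcases j with i | i
  · have := hv (EuclideanSpace.single (Sum.inr i) 1)
    rw [omega8_apply] at this
    simpa [EuclideanSpace.single_apply] using this
  · have := hv (EuclideanSpace.single (Sum.inl i) 1)
    rw [omega8_apply] at this
    simpa [EuclideanSpace.single_apply] using this

lemma mem_sympOrth {U : Submodule ℂ (V8 K)} {v : V8 K} :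
    v ∈ sympOrth U ↔ ∀ u ∈ U, omega8 v u = 0 := Iff.rfl

lemma sympOrth_eq_orthogonal (U : Submodule ℂ (V8 K)) :
    sympOrth U = LinearMap.BilinForm.orthogonal omega8 U := by
  ext v
  constructor
  · intro hv u hu
    exact omega8_isRefl v u (hv u hu)
  · intro hv u hu
    exact omega8_isRefl u v (hv u hu)

lemma finrank_V8 : finrank ℂ (V8 K) = K + K := by
  simp [finrank_euclideanSpace]

lemma finrank_add_finrank_sympOrth (U : Submodule ℂ (V8 K)) :
    finrank ℂ U + finrank ℂ (sympOrth U) = K + K := by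
  rw [sympOrth_eq_orthogonal, ← finrank_V8]
  have := LinearMap.BilinForm.finrank_add_finrank_orthogonal (B := omega8 (K := K))
    omega8_isRefl U
  rwa [LinearMap.BilinForm.orthogonal_top_eq_bot omega8_nondeg, inf_bot_eq,
    finrank_bot, add_zero] at this

lemma sympOrth_sympOrth (U : Submodule ℂ (V8 K)) : sympOrth (sympOrth U) = U := by
  rw [sympOrth_eq_orthogonal, sympOrth_eq_orthogonal]
  exact LinearMap.BilinForm.orthogonal_orthogonal omega8_nondeg omega8_isRefl U

lemma sympOrth_le_sympOrth {U U' : Submodule ℂ (V8 K)} (h : U ≤ U') :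
    sympOrth U' ≤ sympOrth U := fun v hv u hu => hv u (h hu)

lemma sympOrth_sup (U U' : Submodule ℂ (V8 K)) :
    sympOrth (U ⊔ U') = sympOrth U ⊓ sympOrth U' := by
  apply le_antisymm
  · exact le_inf (sympOrth_le_sympOrth le_sup_left) (sympOrth_le_sympOrth le_sup_right)
  · rintro v ⟨hv1, hv2⟩ u hu
    rcases Submodule.mem_sup.mp hu with ⟨x, hx, y, hy, rfl⟩
    rw [map_add, hv1 x hx, hv2 y hy, add_zero]


variable {p : ℕ} {W L L' : Submodule ℂ (V8 K)}

lemma lagrangian_finrank (hL : sympOrth L = L) : finrank ℂ L = K := by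
  have h := finrank_add_finrank_sympOrth L
  rw [hL] at h
  omega

/-- If `L` is Lagrangian then `v,w ∈ L` pair to zero. -/
lemma lag_pair_zero (hL : sympOrth L = L) {v w : V8 K} (hv : v ∈ L) (hw : w ∈ L) :
    omega8 v w = 0 := by
  rw [← hL] at hv
  exact hv w hw

/-- L' is itself Lagrangian. -/
lemma L'_lag (hWco : sympOrth W ≤ W) (hWdim : finrank ℂ W = K + p)
    (hL'1 : sympOrth W ≤ L') (hL'lag : sympOrth L' ⊓ W = L') : sympOrth L' = L' := by
  have h1 : sympOrth L' ≤ sympOrth (sympOrth W) := sympOrth_le_sympOrth hL'1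
  rw [sympOrth_sympOrth] at h1
  have h2 : sympOrth L' ⊓ W = sympOrth L' := inf_eq_left.mpr h1
  rw [h2] at hL'lag
  exact hL'lag

lemma finrank_sympOrth_W (hWdim : finrank ℂ W = K + p) :
    finrank ℂ (sympOrth W) + p = K := by
  have h := finrank_add_finrank_sympOrth W
  have h2 : finrank ℂ W ≤ finrank ℂ (V8 K) := Submodule.finrank_le W
  rw [finrank_V8] at h2
  omega

/-- Key dimension identity: for `L` Lagrangian,
`dim (L ⊓ W) = p + dim (L ⊓ W°)`. -/
lemma finrank_inf_W (hLlag : sympOrth L = L) (hWco : sympOrth W ≤ W)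
    (hWdim : finrank ℂ W = K + p) :
    finrank ℂ (L ⊓ W : Submodule ℂ (V8 K)) =
      p + finrank ℂ (L ⊓ sympOrth W : Submodule ℂ (V8 K)) := by
  have e1 : L ⊓ W = sympOrth (L ⊔ sympOrth W) := by
    rw [sympOrth_sup, hLlag, sympOrth_sympOrth]
  have e2 := finrank_add_finrank_sympOrth (L ⊔ sympOrth W)
  have e3 := Submodule.finrank_sup_add_finrank_inf_eq L (sympOrth W)
  have e4 := finrank_sympOrth_W (p := p) hWdim
  have e5 := lagrangian_finrank hLlag
  rw [e1]
  omega


lemma projOp_isSelfAdjoint (U : Submodule ℂ (V8 K)) : IsSelfAdjoint (projOp U) :=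
  isSelfAdjoint_starProjection U

lemma norm_projOp_apply_le (U : Submodule ℂ (V8 K)) (x : V8 K) : ‖projOp U x‖ ≤ ‖x‖ := by
  have h := (orthogonalProjection U).le_opNorm x
  have h2 := orthogonalProjection_norm_le U
  have : ‖projOp U x‖ = ‖orthogonalProjection U x‖ := rfl
  rw [this]
  nlinarith [norm_nonneg x]

lemma norm_sub_projOp_le (U : Submodule ℂ (V8 K)) (x m : V8 K) (hm : m ∈ U) :
    ‖x - projOp U x‖ ≤ ‖x - m‖ := by
  have : ‖x - projOp U x‖ = ⨅ y : U, ‖x - y‖ := Submodule.starProjection_minimal x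
  rw [this]
  exact ciInf_le ⟨0, fun b hb => by rcases hb with ⟨y, rfl⟩; positivity⟩ (⟨m, hm⟩ : U)

lemma norm_projOp_sub_le {U1 U2 : Submodule ℂ (V8 K)} {δ₁ δ₂ : ℝ}
    (hδ₁ : 0 ≤ δ₁) (hδ₂ : 0 ≤ δ₂)
    (h₁ : ∀ v ∈ U1, ∃ m ∈ U2, ‖v - m‖ ≤ δ₁ * ‖v‖)
    (h₂ : ∀ v ∈ U2, ∃ m ∈ U1, ‖v - m‖ ≤ δ₂ * ‖v‖) :
    ‖projOp U1 - projOp U2‖ ≤ δ₁ + δ₂ := by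
  set P₁ := projOp U1
  set P₂ := projOp U2
  have key : ∀ (Ua Ub : Submodule ℂ (V8 K)) (δ : ℝ), 0 ≤ δ →
      (∀ v ∈ Ua, ∃ m ∈ Ub, ‖v - m‖ ≤ δ * ‖v‖) →
      ‖(1 - projOp Ub).comp (projOp Ua)‖ ≤ δ := by
    intro Ua Ub δ hδ h
    apply ContinuousLinearMap.opNorm_le_bound _ hδ
    intro x
    rcases h (projOp Ua x) (by simp [projOp]) with ⟨m, hm, hest⟩
    calc ‖((1 - projOp Ub).comp (projOp Ua)) x‖
        = ‖projOp Ua x - projOp Ub (projOp Ua x)‖ := by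
          simp [ContinuousLinearMap.sub_apply]
      _ ≤ ‖projOp Ua x - m‖ := norm_sub_projOp_le _ _ _ hm
      _ ≤ δ * ‖projOp Ua x‖ := hest
      _ ≤ δ * ‖x‖ := by
          exact mul_le_mul_of_nonneg_left (norm_projOp_apply_le _ _) hδ
  have hid : P₁ - P₂ = (1 - P₂).comp P₁ - ((1 - P₁).comp P₂).adjoint := by
    have ha : ((1 - P₁).comp P₂).adjoint = P₂.comp (1 - P₁) := by
      rw [ContinuousLinearMap.adjoint_comp]
      rw [(projOp_isSelfAdjoint U2).adjoint_eq]
      congr 1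
      rw [map_sub, (projOp_isSelfAdjoint U1).adjoint_eq, ContinuousLinearMap.one_def, ContinuousLinearMap.adjoint_id]
    rw [ha]
    ext x
    simp [ContinuousLinearMap.sub_apply, ContinuousLinearMap.comp_apply, map_sub]
  rw [hid]
  refine (norm_sub_le _ _).trans ?_
  have h1 := key U1 U2 δ₁ hδ₁ h₁
  have h2 := key U2 U1 δ₂ hδ₂ h₂
  have h2' : ‖((1 - P₁).comp P₂).adjoint‖ = ‖(1 - P₁).comp P₂‖ :=
    ContinuousLinearMap.adjoint.norm_map _
  rw [h2']
  exact add_le_add h1 h2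


/-- transport of sympOrth under a symplectic automorphism -/
lemma sympOrth_map (g h : V8 K →L[ℂ] V8 K) (hgh : ∀ x, h (g x) = x) (hhg : ∀ x, g (h x) = x)
    (hsymp : ∀ x y, omega8 (g x) (g y) = omega8 x y) (U : Submodule ℂ (V8 K)) :
    sympOrth (U.map (g : V8 K →ₗ[ℂ] V8 K)) = (sympOrth U).map (g : V8 K →ₗ[ℂ] V8 K) := by
  ext z
  constructor
  · intro hz
    refine ⟨h z, ?_, hhg z⟩
    intro u hu
    have := hz (g u) ⟨u, hu, rfl⟩
    rwa [← hhg z, hsymp (h z) u] at this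
  · rintro ⟨y, hy, rfl⟩ u' hu'
    rcases hu' with ⟨u, hu, rfl⟩
    simp only [ContinuousLinearMap.coe_coe]
    rw [hsymp]
    exact hy u hu

/-- every functional is `ω(·, v)` for some `v`. -/
lemma exists_omega_rep (ψ : V8 K →ₗ[ℂ] ℂ) : ∃ v : V8 K, ∀ x, omega8 x v = ψ x := by
  have hinj : Function.Injective (LinearMap.flip (omega8 (K := K))) := by
    rw [← LinearMap.ker_eq_bot]
    rw [Submodule.eq_bot_iff]
    intro v hv
    apply omega8_nondeg.1
    intro n
    have : (LinearMap.flip (omega8 (K := K))) v n = 0 := by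
      rw [LinearMap.mem_ker.mp hv]; rfl
    rw [LinearMap.flip_apply] at this
    rw [omega8_skew, this, neg_zero]
  have hsurj : Function.Surjective (LinearMap.flip (omega8 (K := K))) := by
    have hfr : finrank ℂ (V8 K) = finrank ℂ (Module.Dual ℂ (V8 K)) :=
      (Subspace.dual_finrank_eq).symm
    exact (LinearMap.injective_iff_surjective_of_finrank_eq_finrank hfr).mp hinj
  rcases hsurj ψ with ⟨v, hv⟩
  exact ⟨v, fun x => by rw [← hv]; rfl⟩

/-- a functional vanishing on `U` and equal to 1 on `x ∉ U`. -/
lemma exists_functional (U : Submodule ℂ (V8 K)) (x : V8 K) (hx : x ∉ U) :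
    ∃ ψ : V8 K →ₗ[ℂ] ℂ, ψ x = 1 ∧ ∀ u ∈ U, ψ u = 0 := by
  set z : V8 K := x - (orthogonalProjection U x : V8 K) with hz
  have hz0 : z ≠ 0 := by
    intro h
    apply hx
    have : x = (orthogonalProjection U x : V8 K) := by
      have := sub_eq_zero.mp h
      exact this
    rw [this]; exact Submodule.coe_mem _
  have hzU : ∀ u ∈ U, (inner ℂ z u : ℂ) = 0 :=
    (Submodule.mem_orthogonal' U z).mp (Submodule.sub_starProjection_mem_orthogonal x)
  have hzx : (inner ℂ z x : ℂ) = (‖z‖ : ℂ)^2 := by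
    have hxz : x = z + (orthogonalProjection U x : V8 K) := by rw [hz]; abel
    rw [hxz, inner_add_right, hzU _ (Submodule.coe_mem _), add_zero,
      inner_self_eq_norm_sq_to_K]
    norm_num
  refine ⟨((‖z‖ : ℂ)^2)⁻¹ • ((innerSL ℂ z : V8 K →L[ℂ] ℂ) : V8 K →ₗ[ℂ] ℂ), ?_, ?_⟩
  · simp only [LinearMap.smul_apply, ContinuousLinearMap.coe_coe, innerSL_apply_apply]
    rw [hzx, smul_eq_mul, inv_mul_cancel₀]
    simpa using hz0
  · intro u hu
    simp only [LinearMap.smul_apply, ContinuousLinearMap.coe_coe, innerSL_apply_apply]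
    rw [hzU u hu, smul_zero]


/-- relative complement -/
lemma exists_relcompl {X Y : Submodule ℂ (V8 K)} (h : X ≤ Y) :
    ∃ Z : Submodule ℂ (V8 K), Z ≤ Y ∧ X ⊓ Z = ⊥ ∧ X ⊔ Z = Y := by
  obtain ⟨Z', hZ'⟩ := Submodule.exists_isCompl (X.comap Y.subtype)
  refine ⟨Z'.map Y.subtype, map_subtype_le _ _, ?_, ?_⟩
  · have : X = (X.comap Y.subtype).map Y.subtype := by
      rw [Submodule.map_comap_subtype, inf_eq_right.mpr h]
    rw [this, ← Submodule.map_inf _ Subtype.val_injective, hZ'.inf_eq_bot,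
      Submodule.map_bot]
  · have : X = (X.comap Y.subtype).map Y.subtype := by
      rw [Submodule.map_comap_subtype, inf_eq_right.mpr h]
    rw [this, ← Submodule.map_sup, hZ'.sup_eq_top, Submodule.map_top,
      Submodule.range_subtype]


attribute [irreducible] omega8 sympOrth projOp

/-- The quadratic Hamiltonian move associated to a pair of vectors. -/
def mv {K : ℕ} (v w : V8 K) : V8 K →ₗ[ℂ] V8 K :=
  ((omega8.flip v).smulRight w) + ((omega8.flip w).smulRight v)

lemma mv_apply {K : ℕ} (v w x : V8 K) :
    mv v w x = omega8 x v • w + omega8 x w • v := rfl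

lemma mv_mv {K : ℕ} {v w : V8 K} (h0 : omega8 v w = 0) (x : V8 K) :
    mv v w (mv v w x) = 0 := by
  have hwv : omega8 w v = 0 := by rw [omega8_skew, h0, neg_zero]
  simp only [mv_apply, map_add, map_smul, omega8_self, LinearMap.add_apply, LinearMap.smul_apply,
    map_add, map_smul]
  simp [h0, hwv, omega8_self]

lemma mv_symp {K : ℕ} {v w : V8 K} (h0 : omega8 v w = 0) (c : ℂ) (x y : V8 K) :
    omega8 (x + c • mv v w x) (y + c • mv v w y) = omega8 x y := by
  have hwv : omega8 w v = 0 := by rw [omega8_skew, h0, neg_zero]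
  have h1 : omega8 w y = - omega8 y w := omega8_skew _ _
  have h2 : omega8 v y = - omega8 y v := omega8_skew _ _
  simp only [mv_apply, map_add, map_smul, LinearMap.add_apply, LinearMap.smul_apply,
    smul_add, smul_eq_mul]
  simp only [omega8_self, h0, hwv, h1, h2]
  ring

/-- The generic move: perturb a Lagrangian by `1 + c·mv v w`. -/
lemma generic_move (hLlag : sympOrth L = L) (v w : V8 K) (h0 : omega8 v w = 0)
    {ε : ℝ} (hε : 0 < ε) :
    ∃ (Lt : Submodule ℂ (V8 K)) (c : ℂ),
      c ≠ 0 ∧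
      sympOrth Lt = Lt ∧
      ‖projOp Lt - projOp L‖ ≤ ε ∧
      (∀ x ∈ L, x + c • (omega8 x v • w + omega8 x w • v) ∈ Lt) ∧
      (∀ z ∈ Lt, ∃ x ∈ L, z = x + c • (omega8 x v • w + omega8 x w • v)) := by
  set X : V8 K →L[ℂ] V8 K := LinearMap.toContinuousLinearMap (mv v w) with hX
  have hXapp : ∀ x, X x = omega8 x v • w + omega8 x w • v := fun x => rfl
  set t : ℝ := min 1 (ε/3) / (‖X‖ + 1) with ht
  have hXnorm : (0:ℝ) ≤ ‖X‖ := norm_nonneg _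
  have htpos : 0 < t := by
    apply div_pos
    · exact lt_min one_pos (by linarith)
    · linarith
  have htX : t * ‖X‖ ≤ min 1 (ε/3) := by
    rw [ht]
    rw [div_mul_eq_mul_div, div_le_iff₀ (by linarith)]
    have : min 1 (ε/3) * ‖X‖ ≤ min 1 (ε/3) * (‖X‖+1) := by
      apply mul_le_mul_of_nonneg_left (by linarith) (le_min zero_le_one (by linarith))
    linarith [this]
  set c : ℂ := (t : ℂ) with hc
  have hc0 : c ≠ 0 := by
    simp only [hc, ne_eq, Complex.ofReal_eq_zero]
    exact ne_of_gt htpos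
  set g : V8 K →L[ℂ] V8 K := 1 + c • X with hg
  set h : V8 K →L[ℂ] V8 K := 1 - c • X with hh
  have hXX : ∀ x, X (X x) = 0 := fun x => mv_mv h0 x
  have hgapp : ∀ x, g x = x + c • X x := fun x => rfl
  have hhapp : ∀ x, h x = x - c • X x := fun x => rfl
  have hgh : ∀ x, h (g x) = x := by
    intro x
    rw [hgapp, hhapp, map_add, map_smul, hXX]
    simp [map_add, map_smul]
  have hhg : ∀ x, g (h x) = x := by
    intro x
    rw [hhapp, hgapp, map_sub, map_smul, hXX]
    simp [map_sub, map_smul]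
  have hsymp : ∀ x y, omega8 (g x) (g y) = omega8 x y := by
    intro x y
    rw [hgapp, hgapp, hXapp, hXapp]
    exact mv_symp h0 c x y
  refine ⟨L.map (g : V8 K →ₗ[ℂ] V8 K), c, hc0, ?_, ?_, ?_, ?_⟩
  · rw [sympOrth_map g h hgh hhg hsymp, hLlag]
  · -- norm bound
    have hgm1 : ‖g - 1‖ = t * ‖X‖ := by
      have : g - 1 = c • X := by rw [hg]; abel
      rw [this, norm_smul c X, hc, Complex.norm_real, Real.norm_eq_abs, abs_of_pos htpos]
    have hhn : ‖h‖ ≤ 2 := by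
      have : ‖h‖ ≤ ‖(1 : V8 K →L[ℂ] V8 K)‖ + ‖c • X‖ := by
        rw [hh]; exact norm_sub_le _ _
      have h1 : ‖(1 : V8 K →L[ℂ] V8 K)‖ ≤ 1 := ContinuousLinearMap.norm_id_le
      have h2 : ‖c • X‖ = t * ‖X‖ := by
        rw [norm_smul c X, hc, Complex.norm_real, Real.norm_eq_abs, abs_of_pos htpos]
      have h3 : t * ‖X‖ ≤ 1 := le_trans htX (min_le_left _ _)
      linarith
    have hd1 : (0:ℝ) ≤ (t * ‖X‖) * ‖h‖ := by positivity
    have hd2 : (0:ℝ) ≤ t * ‖X‖ := by positivity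
    have key := norm_projOp_sub_le (U1 := L.map (g : V8 K →ₗ[ℂ] V8 K)) (U2 := L) hd1 hd2 ?_ ?_
    · have hX3 : t * ‖X‖ ≤ ε/3 := le_trans htX (min_le_right _ _)
      have hh0 : 0 ≤ ‖h‖ := norm_nonneg _
      calc ‖projOp (L.map (g : V8 K →ₗ[ℂ] V8 K)) - projOp L‖ ≤ (t * ‖X‖) * ‖h‖ + t * ‖X‖ := key
        _ ≤ (ε/3) * 2 + ε/3 := by
            apply add_le_add _ hX3
            apply _root_.mul_le_mul (by linarith) hhn hh0 (by linarith)
        _ ≤ ε := by linarith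
    · rintro z ⟨y, hy, rfl⟩
      refine ⟨y, hy, ?_⟩
      have e1 : g y - y = c • X y := by rw [hgapp]; abel
      have e2 : ‖g y - y‖ ≤ (t * ‖X‖) * ‖y‖ := by
        rw [e1, norm_smul, hc, Complex.norm_real, Real.norm_eq_abs, abs_of_pos htpos,
          mul_assoc]
        exact mul_le_mul_of_nonneg_left (X.le_opNorm y) (le_of_lt htpos)
      have e3 : ‖y‖ = ‖h (g y)‖ := by rw [hgh]
      have e4 : ‖h (g y)‖ ≤ ‖h‖ * ‖g y‖ := h.le_opNorm _
      calc ‖g y - y‖ ≤ (t * ‖X‖) * ‖y‖ := e2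
        _ = (t * ‖X‖) * ‖h (g y)‖ := by rw [← e3]
        _ ≤ (t * ‖X‖) * (‖h‖ * ‖g y‖) := by
            exact mul_le_mul_of_nonneg_left e4 hd2
        _ = (t * ‖X‖) * ‖h‖ * ‖g y‖ := by ring
    · intro y hy
      refine ⟨g y, ⟨y, hy, rfl⟩, ?_⟩
      have e1 : y - g y = -(c • X y) := by rw [hgapp]; abel
      rw [e1, norm_neg, norm_smul, hc, Complex.norm_real, Real.norm_eq_abs,
        abs_of_pos htpos, mul_assoc]
      exact mul_le_mul_of_nonneg_left (X.le_opNorm y) (le_of_lt htpos)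
  · intro x hx
    refine ⟨x, hx, ?_⟩
    rw [ContinuousLinearMap.coe_coe, hgapp, hXapp]
  · rintro z ⟨y, hy, rfl⟩
    exact ⟨y, hy, by rw [ContinuousLinearMap.coe_coe, hgapp, hXapp]⟩


lemma finrank_le_finrank_inf_ker_add_one (T : Submodule ℂ (V8 K)) (φ : V8 K →ₗ[ℂ] ℂ) :
    finrank ℂ T ≤ finrank ℂ (T ⊓ LinearMap.ker φ : Submodule ℂ (V8 K)) + 1 := by
  have h1 := LinearMap.finrank_range_add_finrank_ker (φ.domRestrict T)
  have h2 : finrank ℂ (LinearMap.range (φ.domRestrict T)) ≤ 1 := by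
    have := Submodule.finrank_le (LinearMap.range (φ.domRestrict T))
    simpa using this
  have h3 : LinearMap.ker (φ.domRestrict T) = (T ⊓ LinearMap.ker φ).comap T.subtype := by
    rw [LinearMap.ker_domRestrict]
    ext x
    simp [Submodule.mem_comap]
  have h4 : finrank ℂ ((T ⊓ LinearMap.ker φ).comap T.subtype) =
      finrank ℂ (T ⊓ LinearMap.ker φ : Submodule ℂ (V8 K)) := by
    rw [← Submodule.finrank_map_subtype_eq T ((T ⊓ LinearMap.ker φ).comap T.subtype),
      Submodule.map_comap_subtype, inf_eq_right.mpr inf_le_left]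
  rw [h3, h4] at h1
  omega

/-- The main one-step move: strictly decrease `dim (L ⊓ W°)` while keeping
`dim (L ⊓ L') ≥ p`, moving `L` by at most `ε`. -/
lemma move (hWco : sympOrth W ≤ W) (hWdim : finrank ℂ W = K + p)
    (hLlag : sympOrth L = L) (hL'1 : sympOrth W ≤ L') (hL'2 : L' ≤ W)
    (hL'lagW : sympOrth L' ⊓ W = L')
    (hdim : p ≤ finrank ℂ (L ⊓ L' : Submodule ℂ (V8 K)))
    (hα : L ⊓ sympOrth W ≠ ⊥) {ε : ℝ} (hε : 0 < ε) :
    ∃ Lt : Submodule ℂ (V8 K), sympOrth Lt = Lt ∧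
      p ≤ finrank ℂ (Lt ⊓ L' : Submodule ℂ (V8 K)) ∧
      finrank ℂ (Lt ⊓ sympOrth W : Submodule ℂ (V8 K)) <
        finrank ℂ (L ⊓ sympOrth W : Submodule ℂ (V8 K)) ∧
      ‖projOp Lt - projOp L‖ ≤ ε := by
  obtain ⟨u₀, hu₀, hu₀0⟩ := Submodule.exists_mem_ne_zero_of_ne_bot hα
  rw [Submodule.mem_inf] at hu₀
  obtain ⟨hu₀L, hu₀O⟩ := hu₀
  have hL'lag : sympOrth L' = L' := L'_lag hWco hWdim hL'1 hL'lagW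
  have hu₀L' : u₀ ∈ L' := hL'1 hu₀O
  have hpair0 : ∀ y ∈ W, omega8 u₀ y = 0 := fun y hy => mem_sympOrth.mp hu₀O y hy
  by_cases hcase : p < finrank ℂ (L ⊓ L' : Submodule ℂ (V8 K))
  · -- Move B : a transvection
    have hy : ∃ y, omega8 u₀ y ≠ 0 := by
      by_contra h
      push_neg at h
      exact hu₀0 (omega8_nondeg.1 u₀ h)
    obtain ⟨y, hy⟩ := hy
    obtain ⟨v, hv1⟩ : ∃ v : V8 K, omega8 u₀ v = 1 :=
      ⟨(omega8 u₀ y)⁻¹ • y, by rw [map_smul, smul_eq_mul, inv_mul_cancel₀ hy]⟩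
    obtain ⟨Lt, c, hc0, hLt, hnorm, hfwd, hbwd⟩ := generic_move hLlag v v (omega8_self v) hε
    have hchar : ∀ z ∈ Lt ⊓ sympOrth W, z ∈ (L ⊓ sympOrth W) ∧ omega8 z v = 0 := by
      intro z hz
      rw [Submodule.mem_inf] at hz
      obtain ⟨x, hxL, hxz⟩ := hbwd z hz.1
      have hzW : z ∈ W := hWco hz.2
      have e1 : omega8 u₀ z = 0 := hpair0 z hzW
      rw [hxz] at e1
      simp only [map_add, map_smul, smul_eq_mul] at e1
      rw [lag_pair_zero hLlag hu₀L hxL, hv1] at e1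
      have e1x : c * (omega8 x v + omega8 x v) = 0 := by linear_combination e1
      have hxv : omega8 x v = 0 := by
        rcases mul_eq_zero.mp e1x with h | h
        · exact absurd h hc0
        · exact add_self_eq_zero.mp h
      have hzx : z = x := by
        rw [hxz, hxv]
        simp
      rw [hzx]
      exact ⟨Submodule.mem_inf.mpr ⟨hxL, hzx ▸ hz.2⟩, hxv⟩
    refine ⟨Lt, hLt, ?_, ?_, hnorm⟩
    · -- p ≤ finrank (Lt ⊓ L')
      have hSle : (L ⊓ L') ⊓ LinearMap.ker (omega8.flip v) ≤ Lt ⊓ L' := by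
        intro x hx
        rw [Submodule.mem_inf] at hx
        obtain ⟨hx1, hx2⟩ := hx
        rw [Submodule.mem_inf] at hx1
        have hxv : omega8 x v = 0 := LinearMap.mem_ker.mp hx2
        have := hfwd x hx1.1
        rw [hxv] at this
        simp only [zero_smul, add_zero, smul_zero] at this
        exact Submodule.mem_inf.mpr ⟨this, hx1.2⟩
      have h1 := finrank_le_finrank_inf_ker_add_one (L ⊓ L') (omega8.flip v)
      have h2 := Submodule.finrank_mono hSle
      omega
    · -- strict decrease
      have hle : Lt ⊓ sympOrth W ≤ L ⊓ sympOrth W := fun z hz => (hchar z hz).1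
      have hproper : u₀ ∉ Lt ⊓ sympOrth W := by
        intro h
        have := (hchar u₀ h).2
        rw [hv1] at this
        exact one_ne_zero this
      have hlt : Lt ⊓ sympOrth W < L ⊓ sympOrth W :=
        lt_of_le_of_ne hle (fun heq => hproper (heq ▸ Submodule.mem_inf.mpr ⟨hu₀L, hu₀O⟩))
      exact Submodule.finrank_lt_finrank_of_lt hlt
  · -- Move A
    have ha : finrank ℂ (L ⊓ L' : Submodule ℂ (V8 K)) = p := le_antisymm (not_lt.mp hcase) hdim
    have hα1 : 1 ≤ finrank ℂ (L ⊓ sympOrth W : Submodule ℂ (V8 K)) := by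
      rcases Nat.eq_zero_or_pos (finrank ℂ (L ⊓ sympOrth W : Submodule ℂ (V8 K))) with h | h
      · exact absurd (Submodule.finrank_eq_zero.mp h) hα
      · exact h
    have hnotle : ¬ L' ≤ L ⊔ sympOrth W := by
      intro hcon
      have h1 : L ⊔ L' = L ⊔ sympOrth W :=
        le_antisymm (sup_le le_sup_left hcon) (sup_le_sup_left hL'1 L)
      have d1 := Submodule.finrank_sup_add_finrank_inf_eq L L'
      have d2 := Submodule.finrank_sup_add_finrank_inf_eq L (sympOrth W)
      have d3 := finrank_sympOrth_W hWdim
      have d4 : finrank ℂ L = K := lagrangian_finrank hLlag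
      have d5 : finrank ℂ L' = K := lagrangian_finrank hL'lag
      rw [h1] at d1
      omega
    obtain ⟨w, hwL', hwS⟩ := SetLike.not_le_iff_exists.mp hnotle
    have hwnL : w ∉ L := fun h => hwS (Submodule.mem_sup_left h)
    have hwW : w ∈ W := hL'2 hwL'
    have hu₁ : ∃ u₁', u₁' ∈ L ∧ omega8 w u₁' ≠ 0 := by
      by_contra h
      push_neg at h
      apply hwnL
      rw [← hLlag]
      exact mem_sympOrth.mpr (fun u hu => h u hu)
    obtain ⟨u₁', hu₁'L, hu₁'⟩ := hu₁
    have hu₁'2 : omega8 u₁' w ≠ 0 := by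
      rw [omega8_skew]
      simpa using hu₁'
    obtain ⟨u₁, hu₁L, hu₁w⟩ : ∃ u₁ ∈ L, omega8 u₁ w = 1 :=
      ⟨(omega8 u₁' w)⁻¹ • u₁', Submodule.smul_mem _ _ hu₁'L, by
        rw [map_smul, LinearMap.smul_apply, smul_eq_mul, inv_mul_cancel₀ hu₁'2]⟩
    have hu₀B : u₀ ∈ L ⊓ L' := Submodule.mem_inf.mpr ⟨hu₀L, hu₀L'⟩
    have hBker : L ⊓ L' ≤ LinearMap.ker (omega8.flip w) := by
      intro x hx
      rw [LinearMap.mem_ker, LinearMap.flip_apply]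
      exact lag_pair_zero hL'lag (Submodule.mem_inf.mp hx).2 hwL'
    have hBN : L ⊓ L' ≤ L ⊓ LinearMap.ker (omega8.flip w) := le_inf inf_le_left hBker
    have hspan : (ℂ ∙ u₀) ≤ L ⊓ L' := (Submodule.span_singleton_le_iff_mem _ _).mpr hu₀B
    obtain ⟨B₀, hB₀B, hB₀disj, hB₀sup⟩ := exists_relcompl hspan
    obtain ⟨H₁, hH₁N, hH₁disj, hH₁sup⟩ := exists_relcompl hBN
    have hu₀H' : u₀ ∉ (B₀ ⊔ H₁) ⊔ (ℂ ∙ u₁) := by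
      intro hmem
      obtain ⟨q, hq, r, hr, heq⟩ := Submodule.mem_sup.mp hmem
      obtain ⟨b₀, hb₀, h₁, hh₁, rfl⟩ := Submodule.mem_sup.mp hq
      obtain ⟨s, rfl⟩ := Submodule.mem_span_singleton.mp hr
      -- apply ω(·, w)
      have e0 : omega8 u₀ w = 0 := hpair0 w hwW
      have eb : omega8 b₀ w = 0 := LinearMap.mem_ker.mp (hBker (hB₀B hb₀))
      have eh : omega8 h₁ w = 0 := by
        have := (Submodule.mem_inf.mp (hH₁N hh₁)).2
        rw [LinearMap.mem_ker, LinearMap.flip_apply] at this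
        exact this
      have es : s = 0 := by
        have := congrArg (fun z => omega8 z w) heq
        simp only [map_add, LinearMap.add_apply, map_smul, LinearMap.smul_apply,
          smul_eq_mul] at this
        rw [e0, eb, eh, hu₁w] at this
        simpa using this
      rw [es, zero_smul, add_zero] at heq
      have hBfacts : u₀ - b₀ ∈ (L ⊓ L') ⊓ H₁ := by
        refine Submodule.mem_inf.mpr ⟨Submodule.sub_mem _ hu₀B (hB₀B hb₀), ?_⟩
        have : u₀ - b₀ = h₁ := by rw [← heq]; abel
        rw [this]; exact hh₁
      rw [hH₁disj] at hBfacts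
      have : u₀ = b₀ := by
        have := (Submodule.mem_bot ℂ).mp hBfacts
        have h2 : u₀ - b₀ = 0 := this
        linear_combination (norm := module) h2
      have hu₀B₀ : u₀ ∈ (ℂ ∙ u₀) ⊓ B₀ :=
        Submodule.mem_inf.mpr ⟨Submodule.mem_span_singleton_self u₀, this ▸ hb₀⟩
      rw [hB₀disj] at hu₀B₀
      exact hu₀0 ((Submodule.mem_bot ℂ).mp hu₀B₀)
    obtain ⟨ψ, hψu₀, hψH'⟩ := exists_functional _ u₀ hu₀H'
    obtain ⟨v', hv'⟩ := exists_omega_rep ψ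
    obtain ⟨v, hrep, h0⟩ :
        ∃ v : V8 K, (∀ x ∈ L, omega8 x v = ψ x) ∧ omega8 v w = 0 := by
      refine ⟨v' - (omega8 v' w) • u₁, ?_, ?_⟩
      · intro x hx
        rw [map_sub, map_smul, lag_pair_zero hLlag hx hu₁L, hv']
        simp
      · rw [map_sub, LinearMap.sub_apply, map_smul, LinearMap.smul_apply, hu₁w]
        simp
    obtain ⟨Lt, c, hc0, hLt, hnorm, hfwd, hbwd⟩ := generic_move hLlag v w h0 hε
    have hu₀w0 : omega8 u₀ w = 0 := hpair0 w hwW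
    have hchar : ∀ z ∈ Lt ⊓ sympOrth W, z ∈ (L ⊓ sympOrth W) ∧ ψ z = 0 := by
      intro z hz
      rw [Submodule.mem_inf] at hz
      obtain ⟨x, hxL, hxz⟩ := hbwd z hz.1
      have hzW : z ∈ W := hWco hz.2
      -- step 1 : ω(x,w) = 0
      have e1 : omega8 u₀ z = 0 := hpair0 z hzW
      rw [hxz] at e1
      simp only [map_add, map_smul, smul_eq_mul] at e1
      rw [lag_pair_zero hLlag hu₀L hxL, hu₀w0, hrep u₀ hu₀L, hψu₀] at e1
      have e1x : c * omega8 x w = 0 := by linear_combination e1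
      have hxw : omega8 x w = 0 := by
        rcases mul_eq_zero.mp e1x with h | h
        · exact absurd h hc0
        · exact h
      -- step 2 : ω(x,v) = 0 using q
      have hq : ∃ q, q ∈ sympOrth (L ⊔ sympOrth W) ∧ omega8 w q ≠ 0 := by
        by_contra h
        push_neg at h
        apply hwS
        rw [← sympOrth_sympOrth (L ⊔ sympOrth W)]
        exact mem_sympOrth.mpr (fun u hu => h u hu)
      obtain ⟨q, hqmem, hqw⟩ := hq
      have hqw' : omega8 q w ≠ 0 := by
        rw [omega8_skew]
        simpa using hqw
      have e2 : omega8 q z = 0 :=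
        mem_sympOrth.mp hqmem z (Submodule.mem_sup_right hz.2)
      rw [hxz] at e2
      simp only [map_add, map_smul, smul_eq_mul] at e2
      rw [mem_sympOrth.mp hqmem x (Submodule.mem_sup_left hxL), hxw] at e2
      have e2x : (c * omega8 x v) * omega8 q w = 0 := by linear_combination e2
      have hxv : omega8 x v = 0 := by
        rcases mul_eq_zero.mp e2x with h | h
        · rcases mul_eq_zero.mp h with hx1 | hx1
          · exact absurd hx1 hc0
          · exact hx1
        · exact absurd h hqw'
      have hzx : z = x := by
        rw [hxz, hxv, hxw]
        simp
      rw [hzx]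
      refine ⟨Submodule.mem_inf.mpr ⟨hxL, hzx ▸ hz.2⟩, ?_⟩
      rw [← hrep x hxL]
      exact hxv
    refine ⟨Lt, hLt, ?_, ?_, hnorm⟩
    · -- p ≤ finrank (Lt ⊓ L')
      set z₀ : V8 K := u₀ + c • w with hz₀def
      have hz₀Lt : z₀ ∈ Lt := by
        have := hfwd u₀ hu₀L
        rw [hrep u₀ hu₀L, hψu₀, hu₀w0] at this
        simpa [hz₀def] using this
      have hz₀L' : z₀ ∈ L' := Submodule.add_mem _ hu₀L' (Submodule.smul_mem _ _ hwL')
      have hB₀Lt : B₀ ≤ Lt := by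
        intro x hx
        have hxB : x ∈ L ⊓ L' := hB₀B hx
        have hxL : x ∈ L := (Submodule.mem_inf.mp hxB).1
        have h1 : ψ x = 0 := hψH' x (Submodule.mem_sup_left (Submodule.mem_sup_left hx))
        have h2 : omega8 x w = 0 := by
          have := LinearMap.mem_ker.mp (hBker hxB)
          rwa [LinearMap.flip_apply] at this
        have := hfwd x hxL
        rw [hrep x hxL, h1, h2] at this
        simpa using this
      have hsub : B₀ ⊔ (ℂ ∙ z₀) ≤ Lt ⊓ L' := by
        apply sup_le
        · exact le_inf hB₀Lt (hB₀B.trans inf_le_right)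
        · exact (Submodule.span_singleton_le_iff_mem _ _).mpr
            (Submodule.mem_inf.mpr ⟨hz₀Lt, hz₀L'⟩)
      have hz₀nL : z₀ ∉ L := by
        intro h
        apply hwnL
        have : c • w ∈ L := by
          have := Submodule.sub_mem _ h hu₀L
          simpa [hz₀def] using this
        have := Submodule.smul_mem _ c⁻¹ this
        rwa [smul_smul, inv_mul_cancel₀ hc0, one_smul] at this
      have hz₀0 : z₀ ≠ 0 := fun h => hz₀nL (h ▸ Submodule.zero_mem L)
      have hdisj : B₀ ⊓ (ℂ ∙ z₀) = ⊥ := by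
        rw [eq_bot_iff]
        intro x hx
        rw [Submodule.mem_inf] at hx
        obtain ⟨s, rfl⟩ := Submodule.mem_span_singleton.mp hx.2
        rcases eq_or_ne s 0 with rfl | hs
        · simp
        · exfalso
          apply hz₀nL
          have hL1 : s • z₀ ∈ L := (Submodule.mem_inf.mp (hB₀B hx.1)).1
          have := Submodule.smul_mem _ s⁻¹ hL1
          rwa [smul_smul, inv_mul_cancel₀ hs, one_smul] at this
      have d6 := Submodule.finrank_sup_add_finrank_inf_eq B₀ (ℂ ∙ z₀)
      have d7 : finrank ℂ (ℂ ∙ z₀) = 1 := finrank_span_singleton hz₀0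
      have d8 := Submodule.finrank_sup_add_finrank_inf_eq (ℂ ∙ u₀) B₀
      have d9 : finrank ℂ (ℂ ∙ u₀) = 1 := finrank_span_singleton hu₀0
      rw [hB₀sup, hB₀disj] at d8
      have d10 := Submodule.finrank_mono hsub
      rw [hdisj] at d6
      rw [finrank_bot] at d6 d8
      omega
    · have hle : Lt ⊓ sympOrth W ≤ L ⊓ sympOrth W := fun z hz => (hchar z hz).1
      have hproper : u₀ ∉ Lt ⊓ sympOrth W := by
        intro h
        have := (hchar u₀ h).2
        rw [hψu₀] at this
        exact one_ne_zero this
      have hlt : Lt ⊓ sympOrth W < L ⊓ sympOrth W :=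
        lt_of_le_of_ne hle (fun heq => hproper (heq ▸ Submodule.mem_inf.mpr ⟨hu₀L, hu₀O⟩))
      exact Submodule.finrank_lt_finrank_of_lt hlt

/-- Converting the invariants into the required conclusion. -/
lemma final_conditions (hWco : sympOrth W ≤ W) (hWdim : finrank ℂ W = K + p)
    (hL'1 : sympOrth W ≤ L') (hL'2 : L' ≤ W) (hL'lagW : sympOrth L' ⊓ W = L')
    {L₁ : Submodule ℂ (V8 K)} (hL₁lag : sympOrth L₁ = L₁)
    (hbot : L₁ ⊓ sympOrth W = ⊥) (hsub : L₁ ⊓ W ≤ L') :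
    (L₁ ⊓ W) ⊔ sympOrth W = L' := by
  have hL'lag : sympOrth L' = L' := L'_lag hWco hWdim hL'1 hL'lagW
  have d1 : finrank ℂ (L₁ ⊓ W : Submodule ℂ (V8 K)) = p := by
    have := finrank_inf_W hL₁lag hWco hWdim
    rw [hbot, finrank_bot] at this
    omega
  have d2 := finrank_sympOrth_W (p := p) (W := W) hWdim
  have d3 : (L₁ ⊓ W) ⊓ sympOrth W = ⊥ := by
    rw [inf_assoc, inf_eq_right.mpr hWco, hbot]
  have d4 := Submodule.finrank_sup_add_finrank_inf_eq (L₁ ⊓ W) (sympOrth W)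
  rw [d3, finrank_bot] at d4
  have d5 : finrank ℂ L' = K := lagrangian_finrank hL'lag
  apply Submodule.eq_of_le_of_finrank_le (sup_le hsub hL'1)
  omega

/-- Base case : if `L ⊓ W° = ⊥` then already `L ⊓ W ≤ L'`. -/
lemma base_case (hWco : sympOrth W ≤ W) (hWdim : finrank ℂ W = K + p)
    (hLlag : sympOrth L = L) (hL'2 : L' ≤ W)
    (hdim : p ≤ finrank ℂ (L ⊓ L' : Submodule ℂ (V8 K)))
    (hbot : L ⊓ sympOrth W = ⊥) : L ⊓ W ≤ L' := by
  have d1 : finrank ℂ (L ⊓ W : Submodule ℂ (V8 K)) = p := by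
    have := finrank_inf_W hLlag hWco hWdim
    rw [hbot, finrank_bot] at this
    omega
  have hle : L ⊓ L' ≤ L ⊓ W := inf_le_inf_left L hL'2
  have : L ⊓ L' = L ⊓ W := Submodule.eq_of_le_of_finrank_le hle (by omega)
  rw [← this]
  exact inf_le_right

lemma main_aux (hWco : sympOrth W ≤ W) (hWdim : finrank ℂ W = K + p)
    (hL'1 : sympOrth W ≤ L') (hL'2 : L' ≤ W) (hL'lagW : sympOrth L' ⊓ W = L') :
    ∀ n : ℕ, ∀ L : Submodule ℂ (V8 K), sympOrth L = L →
      p ≤ finrank ℂ (L ⊓ L' : Submodule ℂ (V8 K)) →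
      finrank ℂ (L ⊓ sympOrth W : Submodule ℂ (V8 K)) ≤ n →
      ∀ ε : ℝ, 0 < ε →
      ∃ L₁ : Submodule ℂ (V8 K),
        sympOrth L₁ = L₁ ∧
        L₁ ⊓ sympOrth W = ⊥ ∧
        (L₁ ⊓ W) ⊔ sympOrth W = L' ∧
        ‖projOp L₁ - projOp L‖ ≤ ε := by
  intro n
  induction n with
  | zero =>
    intro L hLlag hdim hn ε hε
    have hbot : L ⊓ sympOrth W = ⊥ :=
      Submodule.finrank_eq_zero.mp (Nat.le_zero.mp hn)
    refine ⟨L, hLlag, hbot, ?_, ?_⟩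
    · exact final_conditions hWco hWdim hL'1 hL'2 hL'lagW hLlag hbot
        (base_case hWco hWdim hLlag hL'2 hdim hbot)
    · rw [sub_self, norm_zero]
      exact le_of_lt hε
  | succ n ih =>
    intro L hLlag hdim hn ε hε
    by_cases hsmall : finrank ℂ (L ⊓ sympOrth W : Submodule ℂ (V8 K)) ≤ n
    · exact ih L hLlag hdim hsmall ε hε
    · have hne : L ⊓ sympOrth W ≠ ⊥ := by
        intro h
        rw [h, finrank_bot] at hsmall
        omega
      obtain ⟨Lt, hLtlag, hLtdim, hLtlt, hLtnorm⟩ :=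
        move hWco hWdim hLlag hL'1 hL'2 hL'lagW hdim hne (half_pos hε)
      obtain ⟨L₁, h1, h2, h3, h4⟩ := ih Lt hLtlag hLtdim (by omega) (ε/2) (half_pos hε)
      refine ⟨L₁, h1, h2, h3, ?_⟩
      calc ‖projOp L₁ - projOp L‖
          = ‖(projOp L₁ - projOp Lt) + (projOp Lt - projOp L)‖ := by abel_nf
        _ ≤ ‖projOp L₁ - projOp Lt‖ + ‖projOp Lt - projOp L‖ := norm_add_le _ _
        _ ≤ ε/2 + ε/2 := add_le_add h4 hLtnorm
        _ = ε := by ring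

end Statement8

/-- The closure-of-graph statement for the rational extension of the symplectic reduction:
if `W` is coisotropic of dimension `K + p`, `L` Lagrangian, `L'` with `W° ⊆ L' ⊆ W` and
`L'/W°` Lagrangian in `W/W°`, and `dim (L ∩ L') ≥ p`, then arbitrarily close to `L` (in the
operator-norm distance of orthogonal projections) there is a Lagrangian `L₁` with
`L₁ ∩ W° = 0` and `t_W(L₁) = L'/W°`, i.e. `(L₁ ∩ W) + W° = L'`. -/
theorem statement_8 {K p : ℕ} (W L L' : Submodule ℂ (V8 K))
    (hWco : sympOrth W ≤ W)
    (hWdim : Module.finrank ℂ ↥W = K + p)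
    (hLlag : sympOrth L = L)
    (hL'1 : sympOrth W ≤ L') (hL'2 : L' ≤ W)
    (hL'lag : sympOrth L' ⊓ W = L')
    (hdim : p ≤ Module.finrank ℂ ↥(L ⊓ L'))
    (ε : ℝ) (hε : 0 < ε) :
    ∃ L₁ : Submodule ℂ (V8 K),
      sympOrth L₁ = L₁ ∧
      L₁ ⊓ sympOrth W = ⊥ ∧
      (L₁ ⊓ W) ⊔ sympOrth W = L' ∧
      ‖projOp L₁ - projOp L‖ ≤ ε := by
  obtain ⟨L₁, h1, h2, h3, h4⟩ := Statement8.main_aux hWco hWdim hL'1 hL'2 hL'lag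
    (Module.finrank ℂ ↥(L ⊓ sympOrth W)) L hLlag hdim le_rfl ε hε
  exact ⟨L₁, h1, h2, h3, h4⟩
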